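/- Let A be an n×n complex matrix such that every eigenvalue of A has negative real part and A + A* is negative semidefinite, and let b be a finite Blaschke product. Then the matrix b(−A) is a contraction, i.e., I − b(−A)*b(−A) is positive semidefinite. -/

import Mathlib

open Matrix
open scoped ComplexOrder

/-- Evaluation of the finite Blaschke product with data `(ρ, α)` at a square
complex matrix `M`: `ρ • ∏ k (M + conj (α k) • 1) * (M - α k • 1)⁻¹`. -/
noncomputable def blaschkeEvalM {n d : ℕ} (ρ : ℂ) (α : Fin d → ℂ)
    (M : Matrix (Fin n) (Fin n) ℂ) : Matrix (Fin n) (Fin n) ℂ :=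
  ρ • (List.ofFn fun k : Fin d =>
      (M + (starRingEnd ℂ (α k)) • (1 : Matrix (Fin n) (Fin n) ℂ)) *
        (M - (α k) • (1 : Matrix (Fin n) (Fin n) ℂ))⁻¹).prod

namespace BlaschkeAux

variable {n : ℕ}

def Contr (C : Matrix (Fin n) (Fin n) ℂ) : Prop :=
  ((1 : Matrix (Fin n) (Fin n) ℂ) - Cᴴ * C).PosSemidef

lemma contr_one : Contr (1 : Matrix (Fin n) (Fin n) ℂ) := by
  unfold Contr
  simp [Matrix.PosSemidef.zero]

lemma contr_mul {B C : Matrix (Fin n) (Fin n) ℂ} (hB : Contr B) (hC : Contr C) :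
    Contr (B * C) := by
  unfold Contr at *
  have key : (1 : Matrix (Fin n) (Fin n) ℂ) - (B * C)ᴴ * (B * C)
      = (1 - Cᴴ * C) + Cᴴ * (1 - Bᴴ * B) * C := by
    simp [Matrix.conjTranspose_mul, Matrix.mul_sub, Matrix.sub_mul, Matrix.mul_assoc]
  rw [key]
  exact hC.add (hB.conjTranspose_mul_mul_same C)

lemma smul_posSemidef {c : ℝ} (hc : 0 ≤ c) {M : Matrix (Fin n) (Fin n) ℂ}
    (hM : M.PosSemidef) : ((c : ℂ) • M).PosSemidef := by
  constructor
  · rw [Matrix.IsHermitian, Matrix.conjTranspose_smul, hM.1]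
    simp
  · intro x
    have := hM.2 x
    have e : (x.sum fun i xi => x.sum fun j xj => star xi * ((c : ℂ) • M) i j * xj)
        = (c : ℂ) * (x.sum fun i xi => x.sum fun j xj => star xi * M i j * xj) := by
      simp only [Finsupp.sum, Finset.mul_sum]
      refine Finset.sum_congr rfl fun i _ => Finset.sum_congr rfl fun j _ => ?_
      simp only [Matrix.smul_apply, smul_eq_mul]; ring
    rw [e]
    exact mul_nonneg (by exact_mod_cast Complex.zero_le_real.mpr hc) this

lemma contr_factor {M : Matrix (Fin n) (Fin n) ℂ} (hM : (M + Mᴴ).PosSemidef)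
    {c : ℂ} (hinv : IsUnit (M - c • 1)) (hc : c.re < 0) :
    Contr ((M + (starRingEnd ℂ c) • 1) * (M - c • 1)⁻¹) := by
  unfold Contr
  set N := M - c • (1 : Matrix (Fin n) (Fin n) ℂ) with hN
  set P := M + (starRingEnd ℂ c) • (1 : Matrix (Fin n) (Fin n) ℂ) with hP
  have hdet : IsUnit N.det := (Matrix.isUnit_iff_isUnit_det N).mp hinv
  have h1 : N * N⁻¹ = 1 := Matrix.mul_nonsing_inv N hdet
  have h2 : N⁻¹ * N = 1 := Matrix.nonsing_inv_mul N hdet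
  have key : (1 : Matrix (Fin n) (Fin n) ℂ) - (P * N⁻¹)ᴴ * (P * N⁻¹)
      = (N⁻¹)ᴴ * (Nᴴ * N - Pᴴ * P) * N⁻¹ := by
    have h1' : (N⁻¹)ᴴ * Nᴴ = 1 := by
      rw [← Matrix.conjTranspose_mul, h1, Matrix.conjTranspose_one]
    calc (1 : Matrix (Fin n) (Fin n) ℂ) - (P * N⁻¹)ᴴ * (P * N⁻¹)
        = (N⁻¹)ᴴ * Nᴴ * (N * N⁻¹) - (N⁻¹)ᴴ * Pᴴ * (P * N⁻¹) := by
          rw [h1', h1, Matrix.conjTranspose_mul]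
          simp [Matrix.mul_assoc]
      _ = (N⁻¹)ᴴ * (Nᴴ * N - Pᴴ * P) * N⁻¹ := by
          simp [Matrix.mul_sub, Matrix.sub_mul, Matrix.mul_assoc]
  rw [key]
  have hD : (Nᴴ * N - Pᴴ * P) = ((-2 * c.re : ℝ) : ℂ) • (M + Mᴴ) := by
    have hNH : Nᴴ = Mᴴ - (starRingEnd ℂ c) • (1 : Matrix (Fin n) (Fin n) ℂ) := by
      simp [hN]
    have hPH : Pᴴ = Mᴴ + c • (1 : Matrix (Fin n) (Fin n) ℂ) := by
      simp [hP]
    have hre : ((-2 * c.re : ℝ) : ℂ) = -(c + starRingEnd ℂ c) := by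
      rw [Complex.add_conj]; push_cast; ring
    rw [hNH, hPH, hN, hP, hre]
    simp only [Matrix.sub_mul, Matrix.mul_sub, Matrix.add_mul, Matrix.mul_add,
      Matrix.smul_mul, Matrix.mul_smul, Matrix.one_mul, Matrix.mul_one, smul_smul]
    module
  rw [hD]
  exact (smul_posSemidef (by nlinarith) hM).conjTranspose_mul_mul_same _

lemma contr_list {L : List (Matrix (Fin n) (Fin n) ℂ)}
    (h : ∀ B ∈ L, Contr B) : Contr L.prod := by
  induction L with
  | nil => simpa using contr_one
  | cons B L ih =>
    rw [List.prod_cons]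
    exact contr_mul (h B (by simp)) (ih fun C hC => h C (by simp [hC]))

end BlaschkeAux

theorem stmt_9 {n d : ℕ}
    (A : Matrix (Fin n) (Fin n) ℂ)
    (hstab : ∀ z ∈ spectrum ℂ A, z.re < 0)
    (hdiss : (-(A + Aᴴ)).PosSemidef)
    (ρ : ℂ) (hρ : ‖ρ‖ = 1)
    (α : Fin d → ℂ) (hα : ∀ k, (α k).re < 0) :
    ((1 : Matrix (Fin n) (Fin n) ℂ)
        - (blaschkeEvalM ρ α (-A))ᴴ * blaschkeEvalM ρ α (-A)).PosSemidef := by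
  set M : Matrix (Fin n) (Fin n) ℂ := -A with hM
  have hMsum : (M + Mᴴ).PosSemidef := by
    have : M + Mᴴ = -(A + Aᴴ) := by simp [hM]; abel
    rw [this]; exact hdiss
  have hprod : BlaschkeAux.Contr
      ((List.ofFn fun k : Fin d =>
        (M + (starRingEnd ℂ (α k)) • (1 : Matrix (Fin n) (Fin n) ℂ)) *
          (M - (α k) • (1 : Matrix (Fin n) (Fin n) ℂ))⁻¹).prod) := by
    apply BlaschkeAux.contr_list
    intro B hB
    rw [List.mem_ofFn] at hB
    obtain ⟨k, rfl⟩ := hB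
    apply BlaschkeAux.contr_factor hMsum _ (hα k)
    -- invertibility of M - α k • 1
    have hspec : (α k) ∉ spectrum ℂ M := by
      intro hmem
      have : -(α k) ∈ spectrum ℂ A := by
        rw [spectrum.mem_iff] at hmem ⊢
        intro hu
        apply hmem
        have : (algebraMap ℂ (Matrix (Fin n) (Fin n) ℂ)) (α k) - M
            = -((algebraMap ℂ (Matrix (Fin n) (Fin n) ℂ)) (-(α k)) - A) := by
          simp [hM]; abel
        rw [this]
        exact hu.neg
      have h1 := hstab _ this
      rw [Complex.neg_re] at h1
      linarith [hα k]
    rw [spectrum.notMem_iff] at hspec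
    have : (algebraMap ℂ (Matrix (Fin n) (Fin n) ℂ)) (α k) - M
        = -(M - (α k) • 1) := by
      rw [Algebra.algebraMap_eq_smul_one]; abel
    rw [this] at hspec
    exact (IsUnit.neg_iff _).mp hspec
  -- now handle the scalar ρ
  unfold blaschkeEvalM
  have hρρ : star ρ * ρ = 1 := by
    rw [mul_comm, Complex.star_def, Complex.mul_conj]
    norm_cast
    rw [Complex.normSq_eq_norm_sq, hρ]; norm_num
  set P := (List.ofFn fun k : Fin d =>
        (M + (starRingEnd ℂ (α k)) • (1 : Matrix (Fin n) (Fin n) ℂ)) *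
          (M - (α k) • (1 : Matrix (Fin n) (Fin n) ℂ))⁻¹).prod with hPdef
  have : (ρ • P)ᴴ * (ρ • P) = Pᴴ * P := by
    rw [Matrix.conjTranspose_smul, Matrix.smul_mul, Matrix.mul_smul, smul_smul, hρρ, one_smul]
  rw [this]
  exact hprod
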